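/- Let X be a finite set, ν a probability measure on X with ν({x}) > 0 for all x, and R a row-stochastic matrix with νR = ν and R² = R. Define x ~ y iff R_x = R_y (equal rows). Then each equivalence class C satisfies R_x(C) = 1 for every x ∈ C, and R_x(·) = ν(· | C) for every x ∈ C, i.e. r_{xy} = ν({y})/ν(C) for x ∈ C and y ∈ C, and r_{xy} = 0 for x ∈ C, y ∉ C. -/
import Mathlib

open Finset

/-- For a row-stochastic matrix `r` on a finite set, stationary w.r.t. a strictly positive
probability vector `ν` and idempotent, each equivalence class `C` of the relation
"equal rows" satisfies: `R_x(C) = 1` for `x ∈ C`, and on `C` the row of any `x ∈ C`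
is the conditional distribution `ν(· | C)`, vanishing outside `C`. -/
theorem idempotent_stochastic_matrix_block_structure {X : Type*} [Fintype X]
    [DecidableEq (X → ℝ)]
    (ν : X → ℝ) (hνpos : ∀ x, 0 < ν x) (hνsum : ∑ x, ν x = 1)
    (r : X → X → ℝ) (hrnonneg : ∀ x y, 0 ≤ r x y) (hrrow : ∀ x, ∑ y, r x y = 1)
    (hstat : ∀ y, ∑ x, ν x * r x y = ν y)
    (hidem : ∀ x y, ∑ z, r x z * r z y = r x y) :
    ∀ x : X,
      (∑ y ∈ univ.filter (fun y => r y = r x), r x y = 1) ∧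
      (∀ y, r y = r x → r x y = ν y / ∑ z ∈ univ.filter (fun z => r z = r x), ν z) ∧
      (∀ y, r y ≠ r x → r x y = 0) := by
  classical
  intro x
  have _inst : Nonempty X := ⟨x⟩
  -- The maximum of each column is positive
  have hMpos : ∀ y m : X, (∀ w, r w y ≤ r m y) → 0 < r m y := by
    intro y m hm
    by_contra h
    push_neg at h
    have hzero : ∀ w, r w y = 0 := fun w =>
      le_antisymm ((hm w).trans h) (hrnonneg w y)
    have : ν y = 0 := by
      rw [← hstat y]
      simp [hzero]
    exact absurd this (ne_of_gt (hνpos y))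
  -- closedness of the argmax set of each column under positive transitions
  have hclosed : ∀ y m : X, (∀ w, r w y ≤ r m y) →
      ∀ a z, r a y = r m y → 0 < r a z → r z y = r m y := by
    intro y m hm a z ha hz
    have hsum0 : ∑ w, r a w * (r m y - r w y) = 0 := by
      have : ∑ w, r a w * (r m y - r w y)
          = (∑ w, r a w) * r m y - ∑ w, r a w * r w y := by
        rw [Finset.sum_mul, ← Finset.sum_sub_distrib]
        exact Finset.sum_congr rfl (fun w _ => by ring)
      rw [this, hrrow a, hidem a y, one_mul, ha, sub_self]
    have hterm : ∀ w ∈ univ, (0:ℝ) ≤ r a w * (r m y - r w y) := fun w _ =>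
      mul_nonneg (hrnonneg a w) (sub_nonneg.mpr (hm w))
    have := (Finset.sum_eq_zero_iff_of_nonneg hterm).mp hsum0 z (mem_univ z)
    have h2 : r m y - r z y = 0 := by
      rcases mul_eq_zero.mp this with h | h
      · exact absurd h (ne_of_gt hz)
      · exact h
    linarith
  -- r y y equals the column maximum, hence is positive
  have hdiagmax : ∀ y m : X, (∀ w, r w y ≤ r m y) → r y y = r m y := by
    intro y m hm
    exact hclosed y m hm m y rfl (hMpos y m hm)
  have hdiagpos : ∀ y : X, 0 < r y y := by
    intro y
    obtain ⟨m, -, hm⟩ := Finset.exists_max_image univ (fun w => r w y) ⟨y, mem_univ y⟩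
    have hm' : ∀ w, r w y ≤ r m y := fun w => hm w (mem_univ w)
    rw [hdiagmax y m hm']
    exact hMpos y m hm'
  -- symmetry of positivity
  have hsym : ∀ a b : X, 0 < r a b → 0 < r b a := by
    intro a b hab
    obtain ⟨m, -, hm⟩ := Finset.exists_max_image univ (fun w => r w a) ⟨a, mem_univ a⟩
    have hm' : ∀ w, r w a ≤ r m a := fun w => hm w (mem_univ w)
    have : r b a = r m a := hclosed a m hm' a b (hdiagmax a m hm') hab
    rw [this]; exact hMpos a m hm'
  -- a positive entry equals the diagonal entry of its column
  have hval : ∀ a z : X, 0 < r a z → r a z = r z z := by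
    intro a z haz
    obtain ⟨m, -, hm⟩ := Finset.exists_max_image univ (fun w => r w z) ⟨z, mem_univ z⟩
    have hm' : ∀ w, r w z ≤ r m z := fun w => hm w (mem_univ w)
    have hza : 0 < r z a := hsym a z haz
    have : r a z = r m z := hclosed z m hm' z a (hdiagmax z m hm') hza
    rw [this, hdiagmax z m hm']
  -- transitivity of positivity
  have htrans : ∀ a b c : X, 0 < r a b → 0 < r b c → 0 < r a c := by
    intro a b c hab hbc
    have hle : r a b * r b c ≤ ∑ w, r a w * r w c :=
      Finset.single_le_sum (f := fun w => r a w * r w c)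
        (fun w _ => mul_nonneg (hrnonneg a w) (hrnonneg w c)) (mem_univ b)
    rw [hidem a c] at hle
    exact lt_of_lt_of_le (mul_pos hab hbc) hle
  -- positive entry implies equal rows
  have hrows : ∀ a b : X, 0 < r a b → r b = r a := by
    intro a b hab
    funext z
    by_cases h : 0 < r a z
    · have hbz : 0 < r b z := htrans b a z (hsym a b hab) h
      rw [hval a z h, hval b z hbz]
    · have haz : r a z = 0 := le_antisymm (not_lt.mp h) (hrnonneg a z)
      have hbz : r b z = 0 := by
        by_contra hb
        have hb' : 0 < r b z := lt_of_le_of_ne (hrnonneg b z) (Ne.symm hb)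
        exact h (htrans a b z hab hb')
      rw [haz, hbz]
  have hzero_of_ne : ∀ a b : X, r b ≠ r a → r a b = 0 := by
    intro a b hne
    by_contra h
    exact hne (hrows a b (lt_of_le_of_ne (hrnonneg a b) (Ne.symm h)))
  -- now the three conclusions
  refine ⟨?_, ?_, fun y hy => hzero_of_ne x y hy⟩
  · rw [← hrrow x]
    exact Finset.sum_subset (filter_subset _ _)
      (fun y _ hy => hzero_of_ne x y (by simpa using hy))
  · intro y hy
    have hCsum : ∑ z ∈ univ.filter (fun z => r z = r x), ν z * r z y
        = ∑ z, ν z * r z y := by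
      apply Finset.sum_subset (filter_subset _ _)
      intro z _ hz
      have hz' : r z ≠ r x := by simpa using hz
      have hzy : r z y = 0 := by
        by_contra h
        have h' : 0 < r z y := lt_of_le_of_ne (hrnonneg z y) (Ne.symm h)
        exact hz' ((hrows z y h').symm.trans hy)
      rw [hzy, mul_zero]
    have hconst : ∑ z ∈ univ.filter (fun z => r z = r x), ν z * r z y
        = (∑ z ∈ univ.filter (fun z => r z = r x), ν z) * r x y := by
      rw [Finset.sum_mul]
      apply Finset.sum_congr rfl
      intro z hz
      have : r z = r x := by simpa using hz
      rw [this]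
    have hstat' : (∑ z ∈ univ.filter (fun z => r z = r x), ν z) * r x y = ν y := by
      rw [← hconst, hCsum, hstat y]
    have hpos : 0 < ∑ z ∈ univ.filter (fun z => r z = r x), ν z := by
      apply Finset.sum_pos (fun z _ => hνpos z)
      exact ⟨x, by simp⟩
    field_simp
    linarith [hstat']
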